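/- arXiv:1911.11345 — 3 statements merged into one kernel-verified Lean document; each statement's English description precedes it below -/
import Mathlib

section
/- Let Y, X, T be as in the missing-data setup with ignorability and positivity, and let φ(x,θ) := E[L(Y,X,θ) | X = x]. If π*(·) and φ*(·,·) are functions such that either π* = π or φ*(·,·) = φ(·,·) (but not necessarily both), then E[ φ*(X,θ) ] + E[ (T/π*(X)) ( L(Y,X,θ) − φ*(X,θ) ) ] = E[ L(Y,X,θ) ]. (Double robustness of the DDR representation of the risk.) -/
open MeasureTheory ProbabilityTheory

section Aux

variable {Ω : Type*} [mΩ : MeasurableSpace Ω] [StandardBorelSpace Ω] [Nonempty Ω]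
  {𝒳 : Type*} [m𝒳 : MeasurableSpace 𝒳]

/-- With ignorability, conditioning a `{0,1}`-valued `T` on the pair `(Y, X)` gives the same
conditional expectation as conditioning on `X` alone. -/
lemma aux_condexp_T_pair
    (μ : Measure Ω) [IsProbabilityMeasure μ]
    (X : Ω → 𝒳) (Y : Ω → ℝ) (T : Ω → ℝ)
    (hX : Measurable X) (hY : Measurable Y) (hT : Measurable T)
    (hT01 : ∀ ω, T ω = 0 ∨ T ω = 1)
    (hindep : CondIndepFun (MeasurableSpace.comap X inferInstance) hX.comap_le T Y μ) :
    μ[T | MeasurableSpace.comap (fun ω => (Y ω, X ω)) inferInstance]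
      =ᵐ[μ] μ[T | MeasurableSpace.comap X inferInstance] := by
  set m' : MeasurableSpace Ω := MeasurableSpace.comap X inferInstance with hm'def
  set Z : Ω → ℝ × 𝒳 := fun ω => (Y ω, X ω) with hZdef
  set m'' : MeasurableSpace Ω := MeasurableSpace.comap Z inferInstance with hm''def
  letI : MeasurableSpace Ω := mΩ
  have hm' : m' ≤ mΩ := hX.comap_le
  have hZ : Measurable Z := hY.prodMk hX
  have hm'' : m'' ≤ mΩ := hZ.comap_le
  have hm'le : m' ≤ m'' := by
    rintro s ⟨D, hD, rfl⟩
    exact ⟨Prod.snd ⁻¹' D, measurable_snd hD, rfl⟩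
  have hTbd : ∀ ω, ‖T ω‖ ≤ 1 := by
    intro ω; rcases hT01 ω with h | h <;> simp [h]
  have hTint : Integrable T μ :=
    (integrable_const (1 : ℝ)).mono' hT.aestronglyMeasurable (Filter.Eventually.of_forall hTbd)
  have hAmeas : MeasurableSet (T ⁻¹' {1}) := hT (measurableSet_singleton 1)
  have hTind : T = Set.indicator (T ⁻¹' {1}) (fun _ => (1 : ℝ)) := by
    funext ω
    rcases hT01 ω with h | h
    · have h1 : ω ∉ T ⁻¹' {1} := by simp [Set.mem_preimage, h]
      simp [Set.indicator_apply, h1, h]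
    · have h1 : ω ∈ T ⁻¹' {1} := by simp [Set.mem_preimage, h]
      simp [Set.indicator_apply, h1, h]
  -- equality of set integrals over all `m''`-measurable sets
  have hg_eq : ∀ s : Set Ω, MeasurableSet[m''] s →
      ∫ x in s, (μ[T|m']) x ∂μ = ∫ x in s, T x ∂μ := by
    have hgen : m'' = MeasurableSpace.generateFrom
        (Set.preimage Z '' Set.image2 (· ×ˢ ·) { s : Set ℝ | MeasurableSet s }
          { t : Set 𝒳 | MeasurableSet t }) := by
      rw [hm''def, ← MeasurableSpace.comap_generateFrom]
      congr 1
      exact generateFrom_prod.symm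
    have hpi : IsPiSystem
        (Set.preimage Z '' Set.image2 (· ×ˢ ·) { s : Set ℝ | MeasurableSet s }
          { t : Set 𝒳 | MeasurableSet t }) := by
      exact isPiSystem_prod.comap Z
    refine MeasurableSpace.induction_on_inter (m := m'') hgen hpi ?_ ?_ ?_ ?_
    · simp
    · -- rectangles
      rintro u ⟨B, hB, rfl⟩
      obtain ⟨C, hC, D, hD, rfl⟩ := hB
      have hpre : Z ⁻¹' (C ×ˢ D) = X ⁻¹' D ∩ Y ⁻¹' C := by
        rw [hZdef, Set.mk_preimage_prod, Set.inter_comm]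
      rw [hpre, ← setIntegral_indicator (hY hC), ← setIntegral_indicator (hY hC)]
      have huD : MeasurableSet[m'] (X ⁻¹' D) := ⟨D, hD, rfl⟩
      have hBmeas : MeasurableSet (Y ⁻¹' C) := hY hC
      -- the right-hand side integrand is an indicator of an intersection
      have hRind : (Y ⁻¹' C).indicator T
          = Set.indicator (T ⁻¹' {1} ∩ Y ⁻¹' C) (fun _ => (1 : ℝ)) := by
        funext ω
        by_cases hω : ω ∈ Y ⁻¹' C
        · rcases hT01 ω with h | h
          · have h1 : ω ∉ T ⁻¹' {1} := by simp [Set.mem_preimage, h]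
            simp [Set.indicator_apply, hω, h1, h]
          · have h1 : ω ∈ T ⁻¹' {1} := by simp [Set.mem_preimage, h]
            simp [Set.indicator_apply, hω, h1, h]
        · simp [Set.indicator_apply, hω]
      have hint1 : Integrable (Set.indicator (T ⁻¹' {1} ∩ Y ⁻¹' C) (fun _ => (1 : ℝ))) μ :=
        (integrable_const (1 : ℝ)).indicator (hAmeas.inter hBmeas)
      -- the left-hand side integrand is a product with an indicator
      have hLind : (Y ⁻¹' C).indicator (μ[T|m'])
          = (μ[T|m']) * (Set.indicator (Y ⁻¹' C) fun _ => (1 : ℝ)) := by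
        funext ω
        by_cases hω : ω ∈ Y ⁻¹' C <;> simp [Set.indicator_apply, hω]
      have hint2 : Integrable (Set.indicator (Y ⁻¹' C) fun _ => (1 : ℝ)) μ :=
        (integrable_const (1 : ℝ)).indicator hBmeas
      have hint3 : Integrable ((μ[T|m']) * (Set.indicator (Y ⁻¹' C) fun _ => (1 : ℝ))) μ := by
        rw [← hLind]; exact integrable_condExp.indicator hBmeas
      have hpull : μ[(μ[T|m']) * (Set.indicator (Y ⁻¹' C) fun _ => (1 : ℝ)) | m']
          =ᵐ[μ] (μ[T|m']) * (μ⟦Y ⁻¹' C | m'⟧) :=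
        condExp_mul_of_stronglyMeasurable_left stronglyMeasurable_condExp hint3 hint2
      have hfac : (μ⟦T ⁻¹' {1} ∩ Y ⁻¹' C | m'⟧)
          =ᵐ[μ] fun ω => (μ⟦T ⁻¹' {1} | m'⟧) ω * (μ⟦Y ⁻¹' C | m'⟧) ω :=
        ((condIndepFun_iff_condExp_inter_preimage_eq_mul hT hY).mp hindep)
          {1} C (measurableSet_singleton 1) hC
      calc ∫ x in X ⁻¹' D, (Y ⁻¹' C).indicator (μ[T|m']) x ∂μ
          = ∫ x in X ⁻¹' D, ((μ[T|m']) * (Set.indicator (Y ⁻¹' C) fun _ => (1 : ℝ))) x ∂μ := by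
            rw [hLind]
        _ = ∫ x in X ⁻¹' D,
              (μ[(μ[T|m']) * (Set.indicator (Y ⁻¹' C) fun _ => (1 : ℝ)) | m']) x ∂μ :=
            (setIntegral_condExp hm' hint3 huD).symm
        _ = ∫ x in X ⁻¹' D, (μ⟦T ⁻¹' {1} ∩ Y ⁻¹' C | m'⟧) x ∂μ := by
            refine integral_congr_ae (ae_restrict_of_ae ?_)
            have hπA : (μ[T|m']) = (μ⟦T ⁻¹' {1} | m'⟧) := by rw [← hTind]
            filter_upwards [hpull, hfac] with ω h1 h2
            rw [h1, Pi.mul_apply, h2, ← hπA]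
        _ = ∫ x in X ⁻¹' D, Set.indicator (T ⁻¹' {1} ∩ Y ⁻¹' C) (fun _ => (1 : ℝ)) x ∂μ :=
            setIntegral_condExp hm' hint1 huD
        _ = ∫ x in X ⁻¹' D, (Y ⁻¹' C).indicator T x ∂μ := by rw [hRind]
    · -- complements
      intro t htm'' hteq
      rw [setIntegral_compl (hm'' t htm'') integrable_condExp,
        setIntegral_compl (hm'' t htm'') hTint, hteq, integral_condExp hm']
    · -- disjoint unions
      intro f hdisj hfm'' hfeq
      rw [integral_iUnion (fun i => hm'' _ (hfm'' i)) hdisj integrable_condExp.integrableOn,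
        integral_iUnion (fun i => hm'' _ (hfm'' i)) hdisj hTint.integrableOn]
      exact tsum_congr hfeq
  exact (ae_eq_condExp_of_forall_setIntegral_eq hm'' hTint
    (fun s _ _ => integrable_condExp.integrableOn)
    (fun s hs _ => hg_eq s hs)
    ((stronglyMeasurable_condExp.mono hm'le).aestronglyMeasurable)).symm

/-- Key factorization: with ignorability, for a `{0,1}`-valued `T` and an integrable `W`
measurable with respect to `σ(Y, X)`,
`E[T W | X] = E[T | X] E[W | X]`. -/
lemma aux_condexp_mul
    (μ : Measure Ω) [IsProbabilityMeasure μ]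
    (X : Ω → 𝒳) (Y : Ω → ℝ) (T : Ω → ℝ)
    (hX : Measurable X) (hY : Measurable Y) (hT : Measurable T)
    (hT01 : ∀ ω, T ω = 0 ∨ T ω = 1)
    (hindep : CondIndepFun (MeasurableSpace.comap X inferInstance) hX.comap_le T Y μ)
    (W : Ω → ℝ)
    (hW : Measurable[MeasurableSpace.comap (fun ω => (Y ω, X ω)) inferInstance] W)
    (hWint : Integrable W μ) :
    μ[fun ω => T ω * W ω | MeasurableSpace.comap X inferInstance]
      =ᵐ[μ] fun ω => (μ[T | MeasurableSpace.comap X inferInstance]) ω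
        * (μ[W | MeasurableSpace.comap X inferInstance]) ω := by
  set m' : MeasurableSpace Ω := MeasurableSpace.comap X inferInstance with hm'def
  set Z : Ω → ℝ × 𝒳 := fun ω => (Y ω, X ω) with hZdef
  set m'' : MeasurableSpace Ω := MeasurableSpace.comap Z inferInstance with hm''def
  letI : MeasurableSpace Ω := mΩ
  have hm' : m' ≤ mΩ := hX.comap_le
  have hZ : Measurable Z := hY.prodMk hX
  have hm'' : m'' ≤ mΩ := hZ.comap_le
  have hm'le : m' ≤ m'' := by
    rintro s ⟨D, hD, rfl⟩
    exact ⟨Prod.snd ⁻¹' D, measurable_snd hD, rfl⟩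
  have hTbd : ∀ ω, ‖T ω‖ ≤ 1 := by
    intro ω; rcases hT01 ω with h | h <;> simp [h]
  have hTint : Integrable T μ :=
    (integrable_const (1 : ℝ)).mono' hT.aestronglyMeasurable (Filter.Eventually.of_forall hTbd)
  have hTm'' : μ[T|m''] =ᵐ[μ] μ[T|m'] :=
    aux_condexp_T_pair μ X Y T hX hY hT hT01 hindep
  have hWsm : StronglyMeasurable[m''] W := hW.stronglyMeasurable
  have hWTint : Integrable (W * T) μ := by
    have h := hWint.bdd_mul hT.aestronglyMeasurable (Filter.Eventually.of_forall hTbd)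
    exact h.congr (Filter.Eventually.of_forall fun ω => mul_comm _ _)
  -- bound on the conditional expectation of T
  have hπ0 : 0 ≤ᵐ[μ] μ[T|m'] := by
    have h0 : (0 : Ω → ℝ) ≤ᵐ[μ] T := by
      refine Filter.Eventually.of_forall fun ω => ?_
      rcases hT01 ω with h | h <;> simp [h]
    calc (0 : Ω → ℝ) = μ[(0 : Ω → ℝ)|m'] := (condExp_zero).symm
      _ ≤ᵐ[μ] μ[T|m'] := condExp_mono (integrable_zero _ _ _) hTint h0
  have hπ1 : μ[T|m'] ≤ᵐ[μ] fun _ => (1 : ℝ) := by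
    have h1 : T ≤ᵐ[μ] fun _ => (1 : ℝ) := by
      refine Filter.Eventually.of_forall fun ω => ?_
      rcases hT01 ω with h | h <;> simp [h]
    calc μ[T|m'] ≤ᵐ[μ] μ[fun _ => (1 : ℝ)|m'] := condExp_mono hTint (integrable_const 1) h1
      _ = fun _ => (1 : ℝ) := condExp_const hm' 1
  have hπbd : ∀ᵐ ω ∂μ, ‖(μ[T|m']) ω‖ ≤ 1 := by
    filter_upwards [hπ0, hπ1] with ω h0 h1
    have h0' : (0 : ℝ) ≤ (μ[T|m']) ω := h0
    rw [Real.norm_eq_abs, abs_le]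
    exact ⟨by linarith, h1⟩
  -- pull-out at level m''
  have step1 : μ[W * T|m''] =ᵐ[μ] W * μ[T|m''] :=
    condExp_mul_of_stronglyMeasurable_left hWsm hWTint hTint
  have step2 : W * μ[T|m''] =ᵐ[μ] fun ω => W ω * (μ[T|m']) ω := by
    filter_upwards [hTm''] with ω h
    simp [h]
  -- tower property
  have tower : μ[W * T|m'] =ᵐ[μ] μ[μ[W * T|m'']|m'] :=
    (condExp_condExp_of_le hm'le hm'').symm
  have hπWint : Integrable (fun ω => (μ[T|m']) ω * W ω) μ :=
    hWint.bdd_mul (stronglyMeasurable_condExp.mono hm').aestronglyMeasurable hπbd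
  have step3 : μ[fun ω => W ω * (μ[T|m']) ω|m']
      =ᵐ[μ] fun ω => (μ[T|m']) ω * (μ[W|m']) ω := by
    have heq : (fun ω => W ω * (μ[T|m']) ω) = fun ω => (μ[T|m']) ω * W ω := by
      funext ω; ring
    rw [heq]
    exact condExp_mul_of_stronglyMeasurable_left stronglyMeasurable_condExp hπWint hWint
  have hTW : (fun ω => T ω * W ω) = W * T := by
    funext ω; simp [mul_comm]
  calc μ[fun ω => T ω * W ω|m'] = μ[W * T|m'] := by rw [hTW]
    _ =ᵐ[μ] μ[μ[W * T|m'']|m'] := tower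
    _ =ᵐ[μ] μ[fun ω => W ω * (μ[T|m']) ω|m'] := condExp_congr_ae (step1.trans step2)
    _ =ᵐ[μ] fun ω => (μ[T|m']) ω * (μ[W|m']) ω := step3

end Aux

/-- **Double robustness of the DDR representation of the risk.**  With ignorability and
positivity, if either `π* = π` (the true propensity score) or `φ*(·,θ) = φ(·,θ)` (the true
outcome regression of the loss), then
`E[φ*(X,θ)] + E[(T/π*(X)) (L(Y,X,θ) − φ*(X,θ))] = E[L(Y,X,θ)]`. -/
theorem ddr_double_robustness
    {Ω : Type*} [mΩ : MeasurableSpace Ω] [StandardBorelSpace Ω] [Nonempty Ω]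
    {𝒳 : Type*} [MeasurableSpace 𝒳] {d : ℕ}
    (μ : Measure Ω) [IsProbabilityMeasure μ]
    (X : Ω → 𝒳) (Y : Ω → ℝ) (T : Ω → ℝ)
    (hX : Measurable X) (hY : Measurable Y) (hT : Measurable T)
    (hT01 : ∀ ω, T ω = 0 ∨ T ω = 1)
    (hindep : CondIndepFun (MeasurableSpace.comap X inferInstance) hX.comap_le T Y μ)
    (L : ℝ → 𝒳 → (Fin d → ℝ) → ℝ) (θ : Fin d → ℝ)
    (hLmeas : Measurable fun p : ℝ × 𝒳 => L p.1 p.2 θ)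
    (hLint : Integrable (fun ω => L (Y ω) (X ω) θ) μ)
    -- the working propensity score `π*`, bounded below by a positive constant
    (pfs : 𝒳 → ℝ) (hpfsmeas : Measurable pfs)
    (δs : ℝ) (hδs : 0 < δs) (hpfslow : ∀ x, δs ≤ pfs x)
    -- the working outcome regression `φ*(·, θ)`
    (φs : 𝒳 → ℝ) (hφsmeas : Measurable φs)
    (hφsint : Integrable (fun ω => φs (X ω)) μ)
    -- either `π*` is the true propensity score or `φ*` is the true outcome regression
    (hDR : ((fun ω => pfs (X ω)) =ᵐ[μ] μ[T | MeasurableSpace.comap X inferInstance]) ∨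
        ((fun ω => φs (X ω)) =ᵐ[μ]
          μ[(fun ω => L (Y ω) (X ω) θ) | MeasurableSpace.comap X inferInstance])) :
    (∫ ω, φs (X ω) ∂μ) +
      ∫ ω, (T ω / pfs (X ω)) * (L (Y ω) (X ω) θ - φs (X ω)) ∂μ =
      ∫ ω, L (Y ω) (X ω) θ ∂μ := by
  set m' : MeasurableSpace Ω := MeasurableSpace.comap X inferInstance with hm'def
  set Z : Ω → ℝ × 𝒳 := fun ω => (Y ω, X ω) with hZdef
  set m'' : MeasurableSpace Ω := MeasurableSpace.comap Z inferInstance with hm''def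
  letI : MeasurableSpace Ω := mΩ
  have hm' : m' ≤ mΩ := hX.comap_le
  have hm'le : m' ≤ m'' := by
    rintro s ⟨D, hD, rfl⟩
    exact ⟨Prod.snd ⁻¹' D, measurable_snd hD, rfl⟩
  set W : Ω → ℝ := fun ω => L (Y ω) (X ω) θ with hWdef
  set V : Ω → ℝ := fun ω => W ω - φs (X ω) with hVdef
  set g : Ω → ℝ := fun ω => (pfs (X ω))⁻¹ with hgdef
  have hpfs_pos : ∀ x, 0 < pfs x := fun x => lt_of_lt_of_le hδs (hpfslow x)
  have hTbd : ∀ ω, ‖T ω‖ ≤ 1 := by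
    intro ω; rcases hT01 ω with h | h <;> simp [h]
  -- measurability facts
  have hWm'' : Measurable[m''] W :=
    fun s hs => ⟨(fun p : ℝ × 𝒳 => L p.1 p.2 θ) ⁻¹' s, hLmeas hs, rfl⟩
  have hφm' : Measurable[m'] (fun ω => φs (X ω)) :=
    fun s hs => ⟨φs ⁻¹' s, hφsmeas hs, rfl⟩
  have hφm'' : Measurable[m''] (fun ω => φs (X ω)) := hφm'.mono hm'le le_rfl
  have hVm'' : Measurable[m''] V := hWm''.sub hφm''
  have hgm' : Measurable[m'] g :=
    fun s hs => ⟨(fun x => (pfs x)⁻¹) ⁻¹' s, hpfsmeas.inv hs, rfl⟩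
  have hgbd : ∀ ω, ‖g ω‖ ≤ δs⁻¹ := by
    intro ω
    rw [hgdef]
    rw [Real.norm_eq_abs, abs_of_pos (inv_pos.mpr (hpfs_pos (X ω)))]
    exact inv_anti₀ hδs (hpfslow (X ω))
  -- integrability facts
  have hVint : Integrable V μ := hLint.sub hφsint
  have hTVint : Integrable (fun ω => T ω * V ω) μ :=
    hVint.bdd_mul hT.aestronglyMeasurable (Filter.Eventually.of_forall hTbd)
  have hgmeas : Measurable g := (hpfsmeas.comp hX).inv
  have hu_int : Integrable (fun ω => g ω * (T ω * V ω)) μ :=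
    hTVint.bdd_mul hgmeas.aestronglyMeasurable (Filter.Eventually.of_forall hgbd)
  -- rewrite the middle integrand
  have hu_eq : ∀ ω, (T ω / pfs (X ω)) * (L (Y ω) (X ω) θ - φs (X ω)) = g ω * (T ω * V ω) := by
    intro ω
    rw [hgdef, hVdef, hWdef, div_eq_mul_inv]
    ring
  -- the key factorization applied to V
  have hkey : μ[fun ω => T ω * V ω|m'] =ᵐ[μ] fun ω => (μ[T|m']) ω * (μ[V|m']) ω :=
    aux_condexp_mul μ X Y T hX hY hT hT01 hindep V hVm'' hVint
  -- conditional expectation of V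
  have hφfix : μ[fun ω => φs (X ω)|m'] = fun ω => φs (X ω) :=
    condExp_of_stronglyMeasurable hm' hφm'.stronglyMeasurable hφsint
  have hVcond : μ[V|m'] =ᵐ[μ] fun ω => (μ[W|m']) ω - φs (X ω) := by
    have h1 : μ[V|m'] =ᵐ[μ] μ[W|m'] - μ[fun ω => φs (X ω)|m'] := condExp_sub hLint hφsint m'
    filter_upwards [h1] with ω h
    rw [h, Pi.sub_apply, hφfix]
  -- pull-out of g
  have hpullg : μ[fun ω => g ω * (T ω * V ω)|m']
      =ᵐ[μ] fun ω => g ω * (μ[fun ω => T ω * V ω|m']) ω := by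
    have := condExp_mul_of_stronglyMeasurable_left (μ := μ) hgm'.stronglyMeasurable
      (f := g) (g := fun ω => T ω * V ω) hu_int hTVint
    exact this
  -- compute the middle integral
  have hmid : ∫ ω, (T ω / pfs (X ω)) * (L (Y ω) (X ω) θ - φs (X ω)) ∂μ
      = ∫ ω, g ω * ((μ[T|m']) ω * ((μ[W|m']) ω - φs (X ω))) ∂μ := by
    calc ∫ ω, (T ω / pfs (X ω)) * (L (Y ω) (X ω) θ - φs (X ω)) ∂μ
        = ∫ ω, g ω * (T ω * V ω) ∂μ :=
          integral_congr_ae (Filter.Eventually.of_forall hu_eq)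
      _ = ∫ ω, (μ[fun ω => g ω * (T ω * V ω)|m']) ω ∂μ := (integral_condExp hm').symm
      _ = ∫ ω, g ω * ((μ[T|m']) ω * ((μ[W|m']) ω - φs (X ω))) ∂μ := by
          refine integral_congr_ae ?_
          filter_upwards [hpullg, hkey, hVcond] with ω h1 h2 h3
          rw [h1, h2, h3]
  rw [hmid]
  -- now split on the double-robustness hypothesis
  rcases hDR with hπ | hφ
  · -- `π*` is the true propensity score
    have hcancel : ∀ᵐ ω ∂μ, g ω * ((μ[T|m']) ω * ((μ[W|m']) ω - φs (X ω)))
        = (μ[W|m']) ω - φs (X ω) := by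
      filter_upwards [hπ] with ω h
      rw [hgdef, ← h, ← mul_assoc, inv_mul_cancel₀ (ne_of_gt (hpfs_pos (X ω))), one_mul]
    rw [integral_congr_ae hcancel]
    have hsub : ∫ ω, ((μ[W|m']) ω - φs (X ω)) ∂μ
        = (∫ ω, (μ[W|m']) ω ∂μ) - ∫ ω, φs (X ω) ∂μ :=
      integral_sub integrable_condExp hφsint
    rw [hsub, integral_condExp hm']
    ring
  · -- `φ*` is the true outcome regression
    have hzero : ∀ᵐ ω ∂μ, g ω * ((μ[T|m']) ω * ((μ[W|m']) ω - φs (X ω))) = 0 := by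
      filter_upwards [hφ] with ω h
      rw [← h]
      simp
    rw [integral_congr_ae hzero, integral_zero, add_zero]
    calc ∫ ω, φs (X ω) ∂μ = ∫ ω, (μ[W|m']) ω ∂μ := integral_congr_ae hφ
      _ = ∫ ω, W ω ∂μ := integral_condExp hm'
end

section
/- Suppose the loss L(y,x,θ) is convex and differentiable in θ with gradient ∇L(y,x,θ) = h(x)(y − g(x,θ)). Define pseudo-outcomes Ỹ_i := m̃(X_i) + (T_i/π̂(X_i))(Y_i − m̃(X_i)) and the pseudo-loss L̃_n(θ) := (1/n) Σ_i L(Ỹ_i, X_i, θ). Then the gradient of L̃_n equals the gradient of the empirical DDR loss L_n^DDR(θ) := (1/n) Σ_i φ̂(X_i,θ) + (1/n) Σ_i (T_i/π̂(X_i)) ( L(Y_i,X_i,θ) − φ̂(X_i,θ) ), where φ̂(x,θ) has gradient h(x)(m̃(x) − g(x,θ)). Consequently, the L1-penalized minimizers of L_n^DDR and L̃_n coincide. -/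
noncomputable section

/-- The empirical DDR loss
`L_n^DDR(θ) = (1/n) Σ_i φ̂(X_i,θ) + (1/n) Σ_i (T_i/π̂(X_i)) (L(Y_i,X_i,θ) − φ̂(X_i,θ))`. -/
def empDDRLoss {d n : ℕ} {𝒳 : Type*} (L : ℝ → 𝒳 → EuclideanSpace ℝ (Fin d) → ℝ)
    (φh : 𝒳 → EuclideanSpace ℝ (Fin d) → ℝ) (πh : 𝒳 → ℝ)
    (Xv : Fin n → 𝒳) (T Y : Fin n → ℝ) (θ : EuclideanSpace ℝ (Fin d)) : ℝ :=
  (n : ℝ)⁻¹ * ∑ i, φh (Xv i) θ +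
    (n : ℝ)⁻¹ * ∑ i, (T i / πh (Xv i)) * (L (Y i) (Xv i) θ - φh (Xv i) θ)

/-- The pseudo-outcome loss `L̃_n(θ) = (1/n) Σ_i L(Ỹ_i, X_i, θ)` with pseudo-outcomes
`Ỹ_i = m̃(X_i) + (T_i/π̂(X_i)) (Y_i − m̃(X_i))`. -/
def pseudoLoss {d n : ℕ} {𝒳 : Type*} (L : ℝ → 𝒳 → EuclideanSpace ℝ (Fin d) → ℝ)
    (mt : 𝒳 → ℝ) (πh : 𝒳 → ℝ)
    (Xv : Fin n → 𝒳) (T Y : Fin n → ℝ) (θ : EuclideanSpace ℝ (Fin d)) : ℝ :=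
  (n : ℝ)⁻¹ * ∑ i, L (mt (Xv i) + (T i / πh (Xv i)) * (Y i - mt (Xv i))) (Xv i) θ

/-- **Pseudo-outcome representation of the DDR loss.**  If the loss `L(y,x,θ)` is convex and
differentiable in `θ` with gradient `h(x) (y − g(x,θ))`, and `φ̂(x,·)` has gradient
`h(x) (m̃(x) − g(x,θ))`, then the pseudo-loss `L̃_n` and the empirical DDR loss `L_n^DDR`
have the same gradient at every `θ`, and consequently their `L1`-penalized minimizers
coincide. -/
theorem ddr_pseudo_outcome_equivalence {d n : ℕ} {𝒳 : Type*}
    (L : ℝ → 𝒳 → EuclideanSpace ℝ (Fin d) → ℝ)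
    (h : 𝒳 → EuclideanSpace ℝ (Fin d)) (g : 𝒳 → EuclideanSpace ℝ (Fin d) → ℝ)
    (hconv : ∀ (y : ℝ) (x : 𝒳), ConvexOn ℝ Set.univ (L y x))
    (hLgrad : ∀ (y : ℝ) (x : 𝒳) (θ : EuclideanSpace ℝ (Fin d)),
      HasGradientAt (L y x) ((y - g x θ) • h x) θ)
    (πh : 𝒳 → ℝ) (hπpos : ∀ x, 0 < πh x) (hπle : ∀ x, πh x ≤ 1)
    (mt : 𝒳 → ℝ)
    (φh : 𝒳 → EuclideanSpace ℝ (Fin d) → ℝ)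
    (hφgrad : ∀ (x : 𝒳) (θ : EuclideanSpace ℝ (Fin d)),
      HasGradientAt (φh x) ((mt x - g x θ) • h x) θ)
    (Xv : Fin n → 𝒳) (T Y : Fin n → ℝ) :
    (∀ θ v : EuclideanSpace ℝ (Fin d),
      HasGradientAt (empDDRLoss L φh πh Xv T Y) v θ ↔
        HasGradientAt (pseudoLoss L mt πh Xv T Y) v θ) ∧
    (∀ lam : ℝ, 0 ≤ lam → ∀ θstar : EuclideanSpace ℝ (Fin d),
      ((∀ θ, empDDRLoss L φh πh Xv T Y θstar + lam * ∑ i, |θstar i| ≤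
          empDDRLoss L φh πh Xv T Y θ + lam * ∑ i, |θ i|) ↔
        (∀ θ, pseudoLoss L mt πh Xv T Y θstar + lam * ∑ i, |θstar i| ≤
          pseudoLoss L mt πh Xv T Y θ + lam * ∑ i, |θ i|))) := by
  classical
  set v0 : EuclideanSpace ℝ (Fin d) → EuclideanSpace ℝ (Fin d) := fun θ =>
    (n : ℝ)⁻¹ • ∑ i, ((mt (Xv i) + (T i / πh (Xv i)) * (Y i - mt (Xv i)) - g (Xv i) θ) • h (Xv i)) with hv0
  have keyP : ∀ θ, HasGradientAt (pseudoLoss L mt πh Xv T Y) (v0 θ) θ := by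
    intro θ
    rw [hasGradientAt_iff_hasFDerivAt]
    have hsum : HasFDerivAt
        (fun θ => ∑ i, L (mt (Xv i) + (T i / πh (Xv i)) * (Y i - mt (Xv i))) (Xv i) θ)
        (∑ i, InnerProductSpace.toDual ℝ _
          ((mt (Xv i) + (T i / πh (Xv i)) * (Y i - mt (Xv i)) - g (Xv i) θ) • h (Xv i))) θ := by
      apply HasFDerivAt.fun_sum
      intro i _
      exact (hLgrad _ (Xv i) θ).hasFDerivAt
    have := hsum.const_mul ((n : ℝ)⁻¹)
    refine this.congr_fderiv ?_
    rw [hv0]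
    simp [map_sum, map_smul, Finset.smul_sum]
  have keyE : ∀ θ, HasGradientAt (empDDRLoss L φh πh Xv T Y) (v0 θ) θ := by
    intro θ
    rw [hasGradientAt_iff_hasFDerivAt]
    have h1 : HasFDerivAt (fun θ => ∑ i, φh (Xv i) θ)
        (∑ i, InnerProductSpace.toDual ℝ _ ((mt (Xv i) - g (Xv i) θ) • h (Xv i))) θ :=
      HasFDerivAt.fun_sum fun i _ => (hφgrad (Xv i) θ).hasFDerivAt
    have h2 : HasFDerivAt
        (fun θ => ∑ i, (T i / πh (Xv i)) * (L (Y i) (Xv i) θ - φh (Xv i) θ))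
        (∑ i, (T i / πh (Xv i)) • (InnerProductSpace.toDual ℝ _ ((Y i - g (Xv i) θ) • h (Xv i)) -
          InnerProductSpace.toDual ℝ _ ((mt (Xv i) - g (Xv i) θ) • h (Xv i)))) θ := by
      apply HasFDerivAt.fun_sum
      intro i _
      exact ((hLgrad (Y i) (Xv i) θ).hasFDerivAt.sub (hφgrad (Xv i) θ).hasFDerivAt).const_mul ((T i / πh (Xv i)))
    have := (h1.const_mul ((n : ℝ)⁻¹)).add (h2.const_mul ((n : ℝ)⁻¹))
    refine this.congr_fderiv ?_
    rw [hv0]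
    simp only [map_sum, map_smul, Finset.smul_sum, ← smul_add]
    congr 1
    rw [← Finset.sum_add_distrib]
    refine Finset.sum_congr rfl fun i _ => ?_
    match_scalars
    field_simp
    ring
  have hconst : ∀ θ, empDDRLoss L φh πh Xv T Y θ =
      pseudoLoss L mt πh Xv T Y θ +
        (empDDRLoss L φh πh Xv T Y 0 - pseudoLoss L mt πh Xv T Y 0) := by
    intro θ
    have hdiff : ∀ θ', HasFDerivAt
        (fun θ => empDDRLoss L φh πh Xv T Y θ - pseudoLoss L mt πh Xv T Y θ)
        (0 : EuclideanSpace ℝ (Fin d) →L[ℝ] ℝ) θ' := by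
      intro θ'
      have := (keyE θ').hasFDerivAt.sub (keyP θ').hasFDerivAt
      simp at this; exact this
    have hd : Differentiable ℝ
        (fun θ => empDDRLoss L φh πh Xv T Y θ - pseudoLoss L mt πh Xv T Y θ) :=
      fun θ' => (hdiff θ').differentiableAt
    have := is_const_of_fderiv_eq_zero hd (fun θ' => (hdiff θ').fderiv) θ 0
    linarith [this]
  refine ⟨fun θ v => ?_, fun lam _ θstar => ?_⟩
  · constructor
    · intro hE
      have : v = v0 θ := hE.unique (keyE θ)
      rw [this]; exact keyP θ
    · intro hP
      have : v = v0 θ := hP.unique (keyP θ)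
      rw [this]; exact keyE θ
  · constructor
    · intro H θ
      have := H θ
      rw [hconst θstar, hconst θ] at this
      linarith
    · intro H θ
      have := H θ
      rw [hconst θstar, hconst θ]
      linarith
end
end

section
/- Let Z ∈ {0,1} be a binary random variable with p := P(Z = 1), and let Z̃ := Z − p. Then Z̃ is sub-Gaussian with ψ₂-Orlicz norm ‖Z̃‖_{ψ₂} ≤ 2 p̃, where p̃ = 0 if p ∈ {0,1}, p̃ = 1/2 if p = 1/2, and p̃ = [ (p − 1/2) / log( p/(1−p) ) ]^{1/2} otherwise. -/
open MeasureTheory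

lemma exp_quarter_le : Real.exp (1/4) ≤ 4/3 := by
  have h4 : Real.exp (1/4) ^ 4 = Real.exp 1 := by
    rw [← Real.exp_nat_mul]; norm_num
  have h := Real.exp_one_lt_d9
  have hpos := Real.exp_pos (1/4 : ℝ)
  nlinarith [sq_nonneg (Real.exp (1/4) - 4/3), sq_nonneg (Real.exp (1/4) + 4/3),
    sq_nonneg (Real.exp (1/4)^2 - 16/9), sq_nonneg (Real.exp (1/4)^2 + 16/9)]

lemma core (p q t : ℝ) (hq0 : 0 < q) (hq : q ≤ 1/2) (hpq : p + q = 1)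
    (ht : q^2 * t ≤ 1/4) (hL : p^2 * t = q^2 * t + Real.log (p/q) / 2) :
    p * Real.exp (q^2*t) + q * Real.exp (p^2*t) ≤ 2 := by
  have hp0 : 0 < p := by linarith
  have hpq0 : 0 < p / q := div_pos hp0 hq0
  have hexp2 : Real.exp (Real.log (p/q) / 2) ^ 2 = p / q := by
    rw [← Real.exp_nat_mul]
    · push_cast
      rw [show (2:ℝ) * (Real.log (p/q) / 2) = Real.log (p/q) by ring, Real.exp_log hpq0]
  have hsqrt : Real.exp (Real.log (p/q) / 2) = Real.sqrt (p/q) := by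
    have h := Real.sqrt_sq (Real.exp_pos (Real.log (p/q) / 2)).le
    rw [hexp2] at h; exact h.symm
  have h1 : Real.exp (p^2*t) = Real.exp (q^2*t) * Real.sqrt (p/q) := by
    rw [hL, Real.exp_add, hsqrt]
  have h2 : q * Real.sqrt (p/q) = Real.sqrt p * Real.sqrt q := by
    rw [Real.sqrt_div hp0.le, ← Real.sqrt_sq hq0.le]
    rw [Real.sqrt_sq hq0.le]
    rw [show q * (Real.sqrt p / Real.sqrt q) = Real.sqrt p * (q / Real.sqrt q) by ring,
      Real.div_sqrt]
  have h3 : Real.sqrt p * Real.sqrt q ≤ 1/2 := by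
    rw [← Real.sqrt_mul hp0.le]
    have hpq4 : p * q ≤ 1/4 := by nlinarith [sq_nonneg (p - q)]
    calc Real.sqrt (p*q) ≤ Real.sqrt (1/4) := Real.sqrt_le_sqrt hpq4
      _ = 1/2 := by
        rw [show (1/4:ℝ) = (1/2)^2 by norm_num, Real.sqrt_sq (by norm_num)]
  have h4 : Real.exp (q^2*t) ≤ 4/3 :=
    le_trans (Real.exp_le_exp.2 ht) exp_quarter_le
  have hp1 : p ≤ 1 := by linarith
  have hE : 0 < Real.exp (q^2*t) := Real.exp_pos _
  have hs : 0 ≤ Real.sqrt p * Real.sqrt q := mul_nonneg (Real.sqrt_nonneg _) (Real.sqrt_nonneg _)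
  calc p * Real.exp (q^2*t) + q * Real.exp (p^2*t)
      = Real.exp (q^2*t) * (p + Real.sqrt p * Real.sqrt q) := by rw [h1, ← h2]; ring
    _ ≤ (4/3) * (3/2) := by
        apply mul_le_mul h4 (by linarith) (by linarith) (by norm_num)
    _ = 2 := by norm_num


lemma real_key (p : ℝ) (hp0 : 0 < p) (hp1 : p < 1) (hp2 : p ≠ 1/2) :
    p * Real.exp ((1-p)^2 / (2 * Real.sqrt ((p - 1/2) / Real.log (p/(1-p))))^2)
    + (1-p) * Real.exp (p^2 / (2 * Real.sqrt ((p - 1/2) / Real.log (p/(1-p))))^2) ≤ 2 := by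
  set q : ℝ := 1 - p with hq
  set L : ℝ := Real.log (p/q) with hLdef
  have hq0 : 0 < q := by rw [hq]; linarith
  have hLpos : 0 < (p - 1/2) / L := by
    rcases lt_or_gt_of_ne hp2 with h | h
    · have hL0 : L < 0 := Real.log_neg (div_pos hp0 hq0) (by rw [div_lt_one hq0]; linarith)
      exact div_pos_of_neg_of_neg (by linarith) hL0
    · have hL0 : 0 < L := Real.log_pos (by rw [lt_div_iff₀ hq0]; linarith)
      exact div_pos (by linarith) hL0
  have hLne : L ≠ 0 := by
    intro h; rw [h, div_zero] at hLpos; exact lt_irrefl 0 hLpos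
  have hpne : p - 1/2 ≠ 0 := fun h => hp2 (by linarith [sub_eq_zero.mp h])
  have hsq : (2 * Real.sqrt ((p - 1/2) / L))^2 = 4 * ((p - 1/2)/L) := by
    rw [mul_pow, Real.sq_sqrt hLpos.le]; norm_num
  set t : ℝ := L / (4 * (p - 1/2)) with htdef
  have hdiv : ∀ a : ℝ, a / (2 * Real.sqrt ((p - 1/2) / L))^2 = a * t := by
    intro a
    rw [hsq, htdef]
    field_simp
  rw [hdiv, hdiv]
  have hLkey : p^2 * t - q^2 * t = L/2 := by
    have h1 : p^2 - q^2 = 2*(p-1/2) := by rw [hq]; ring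
    calc p^2*t - q^2*t = (p^2-q^2)*t := by ring
      _ = (2*(p-1/2)) * (L/(4*(p-1/2))) := by rw [h1, htdef]
      _ = L/2 := by
          have h4 : (4:ℝ)*(p-1/2) ≠ 0 := fun hc => hpne (by linarith)
          rw [mul_comm, div_mul_eq_mul_div, div_eq_div_iff h4 two_ne_zero]; ring
  rcases lt_or_gt_of_ne hp2 with h | h
  · -- p < 1/2 : apply core with roles swapped
    have hqp : 0 < q - p := by rw [hq]; linarith
    have hcore := core q p t hp0 (by linarith) (by rw [hq]; ring)
    have hlog : Real.log (q/p) = -L := by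
      rw [hLdef, Real.log_div hp0.ne' hq0.ne', Real.log_div hq0.ne' hp0.ne']; ring
    have hL2 : q^2 * t = p^2 * t + Real.log (q/p) / 2 := by
      rw [hlog]; linarith [hLkey]
    have hlb : -L ≤ (q - p) / p := by
      have h1 := Real.log_le_sub_one_of_pos (div_pos hq0 hp0)
      have h2 : q/p - 1 = (q-p)/p := by field_simp
      rw [← hlog]; rw [h2] at h1; exact h1
    have htval : t = (-L)/(2*(q-p)) := by
      rw [htdef, div_eq_div_iff (by intro hc; exact hpne (by linarith))
        (by positivity)]
      rw [hq]; ring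
    have ht4 : p^2 * t ≤ 1/4 := by
      have htle : t ≤ 1/(2*p) := by
        rw [htval, div_le_div_iff₀ (by linarith) (by linarith)]
        have h2 : -L * (2*p) ≤ ((q-p)/p) * (2*p) :=
          mul_le_mul_of_nonneg_right hlb (by linarith)
        have h3 : ((q-p)/p) * (2*p) = 2*(q-p) := by field_simp
        rw [h3] at h2; linarith
      calc p^2 * t ≤ p^2 * (1/(2*p)) :=
            mul_le_mul_of_nonneg_left htle (by positivity)
        _ = p/2 := by field_simp
        _ ≤ 1/4 := by linarith
    have hfin := hcore ht4 hL2
    linarith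
  · -- p > 1/2 : apply core directly
    have hqp : 0 < p - q := by rw [hq]; linarith
    have hcore := core p q t hq0 (by rw [hq]; linarith) (by rw [hq]; ring)
    have hL2 : p^2 * t = q^2 * t + L / 2 := by linarith [hLkey]
    have hlb : L ≤ (p - q) / q := by
      have h1 := Real.log_le_sub_one_of_pos (div_pos hp0 hq0)
      have h2 : p/q - 1 = (p-q)/q := by field_simp
      rw [h2] at h1; exact h1
    have htval : t = L/(2*(p-q)) := by
      rw [htdef, div_eq_div_iff (by intro hc; exact hpne (by linarith))
        (by positivity)]
      rw [hq]; ring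
    have ht4 : q^2 * t ≤ 1/4 := by
      have htle : t ≤ 1/(2*q) := by
        rw [htval, div_le_div_iff₀ (by linarith) (by linarith)]
        have h2 : L * (2*q) ≤ ((p-q)/q) * (2*q) :=
          mul_le_mul_of_nonneg_right hlb (by linarith)
        have h3 : ((p-q)/q) * (2*q) = 2*(p-q) := by field_simp
        rw [h3] at h2; linarith
      calc q^2 * t ≤ q^2 * (1/(2*q)) :=
            mul_le_mul_of_nonneg_left htle (by positivity)
        _ = q/2 := by field_simp
        _ ≤ 1/4 := by rw [hq]; linarith
    exact hcore ht4 hL2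


/-- The `ψ₂`-Orlicz (sub-Gaussian) norm:
`‖X‖_{ψ₂} = inf { c > 0 : E[exp(X²/c²)] ≤ 2 }`. -/
noncomputable def psi2Norm {Ω : Type*} [MeasurableSpace Ω] (μ : Measure Ω)
    (X : Ω → ℝ) : ℝ :=
  sInf {c : ℝ | 0 < c ∧ ∫⁻ ω, ENNReal.ofReal (Real.exp ((X ω) ^ 2 / c ^ 2)) ∂μ ≤ 2}

open Classical in
/-- **Sub-Gaussian property of centered binary random variables.**  If `Z ∈ {0,1}` with
`p = P(Z = 1)` and `Z̃ = Z − p`, then `‖Z̃‖_{ψ₂} ≤ 2 p̃`, where `p̃ = 0` if `p ∈ {0,1}`,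
`p̃ = 1/2` if `p = 1/2`, and `p̃ = ((p − 1/2)/log(p/(1−p)))^{1/2}` otherwise. -/
theorem binary_subGaussian {Ω : Type*} [MeasurableSpace Ω] (μ : Measure Ω)
    [IsProbabilityMeasure μ] (Z : Ω → ℝ) (hZ : Measurable Z)
    (hZ01 : ∀ ω, Z ω = 0 ∨ Z ω = 1) :
    psi2Norm μ (fun ω => Z ω - (μ {ω | Z ω = 1}).toReal) ≤
      2 * (if (μ {ω | Z ω = 1}).toReal = 0 ∨ (μ {ω | Z ω = 1}).toReal = 1 then 0
        else if (μ {ω | Z ω = 1}).toReal = 1 / 2 then 1 / 2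
        else Real.sqrt (((μ {ω | Z ω = 1}).toReal - 1 / 2) /
          Real.log ((μ {ω | Z ω = 1}).toReal / (1 - (μ {ω | Z ω = 1}).toReal)))) := by
  set A : Set Ω := {ω | Z ω = 1} with hAdef
  have hA : MeasurableSet A := by
    have : A = Z ⁻¹' {1} := by ext ω; simp [hAdef]
    rw [this]; exact hZ (measurableSet_singleton 1)
  set p : ℝ := (μ A).toReal with hpdef
  have hp0 : 0 ≤ p := ENNReal.toReal_nonneg
  have hp1 : p ≤ 1 := by
    rw [hpdef]
    exact ENNReal.toReal_le_of_le_ofReal one_pos.le (by simpa using prob_le_one)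
  have hμA : μ A = ENNReal.ofReal p := (ENNReal.ofReal_toReal (measure_ne_top μ A)).symm
  have hμAc : μ Aᶜ = ENNReal.ofReal (1 - p) := by
    rw [measure_compl hA (measure_ne_top μ A), measure_univ, hμA,
      ENNReal.ofReal_sub 1 hp0, ENNReal.ofReal_one]
  -- integral computation
  have hint : ∀ c : ℝ,
      ∫⁻ ω, ENNReal.ofReal (Real.exp ((Z ω - p) ^ 2 / c ^ 2)) ∂μ
        = ENNReal.ofReal (p * Real.exp ((1-p)^2 / c^2)
            + (1-p) * Real.exp (p^2 / c^2)) := by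
    intro c
    rw [← lintegral_add_compl (fun ω => ENNReal.ofReal (Real.exp ((Z ω - p) ^ 2 / c ^ 2))) hA]
    have e1 : ∫⁻ ω in A, ENNReal.ofReal (Real.exp ((Z ω - p) ^ 2 / c ^ 2)) ∂μ
        = ENNReal.ofReal (Real.exp ((1-p)^2 / c^2)) * μ A := by
      rw [setLIntegral_congr_fun hA (fun ω hω => by
        have h1 : Z ω = 1 := hω
        rw [h1]), setLIntegral_const]
    have e2 : ∫⁻ ω in Aᶜ, ENNReal.ofReal (Real.exp ((Z ω - p) ^ 2 / c ^ 2)) ∂μ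
        = ENNReal.ofReal (Real.exp (p^2 / c^2)) * μ Aᶜ := by
      rw [setLIntegral_congr_fun hA.compl (fun ω hω => by
        have h1 : Z ω = 0 := by
          rcases hZ01 ω with h | h
          · exact h
          · exact absurd h hω
        rw [h1, show ((0:ℝ)-p)^2 = p^2 by ring]), setLIntegral_const]
    rw [e1, e2, hμA, hμAc,
      ← ENNReal.ofReal_mul (Real.exp_nonneg _), ← ENNReal.ofReal_mul (Real.exp_nonneg _),
      ← ENNReal.ofReal_add (mul_nonneg (Real.exp_nonneg _) hp0)
        (mul_nonneg (Real.exp_nonneg _) (by linarith : (0:ℝ) ≤ 1 - p))]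
    congr 1
    ring
  have hbdd : BddBelow {c : ℝ | 0 < c ∧
      ∫⁻ ω, ENNReal.ofReal (Real.exp ((Z ω - p) ^ 2 / c ^ 2)) ∂μ ≤ 2} :=
    ⟨0, fun x hx => hx.1.le⟩
  have hmem : ∀ c : ℝ, 0 < c →
      p * Real.exp ((1-p)^2 / c^2) + (1-p) * Real.exp (p^2 / c^2) ≤ 2 →
      psi2Norm μ (fun ω => Z ω - p) ≤ c := by
    intro c hc hreal
    apply csInf_le hbdd
    refine ⟨hc, ?_⟩
    rw [hint c]
    calc ENNReal.ofReal (p * Real.exp ((1-p)^2 / c^2) + (1-p) * Real.exp (p^2 / c^2))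
        ≤ ENNReal.ofReal 2 := ENNReal.ofReal_le_ofReal hreal
      _ = 2 := by norm_num
  by_cases h01 : p = 0 ∨ p = 1
  · rw [if_pos h01, mul_zero]
    apply le_of_forall_pos_le_add
    intro ε hε
    rw [zero_add]
    apply hmem ε hε
    rcases h01 with h | h
    · rw [h]; norm_num
    · rw [h]; norm_num
  · push_neg at h01
    obtain ⟨hne0, hne1⟩ := h01
    have hp0' : 0 < p := lt_of_le_of_ne hp0 (Ne.symm hne0)
    have hp1' : p < 1 := lt_of_le_of_ne hp1 hne1
    rw [if_neg (by push_neg; exact ⟨hne0, hne1⟩)]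
    by_cases hhalf : p = 1/2
    · rw [if_pos hhalf]
      norm_num
      apply hmem 1 one_pos
      rw [hhalf]
      have h14 := exp_quarter_le
      norm_num at h14 ⊢
      linarith
    · rw [if_neg hhalf]
      have hkey := real_key p hp0' hp1' hhalf
      have hcpos : 0 < 2 * Real.sqrt ((p - 1/2) / Real.log (p/(1-p))) := by
        have hq0 : 0 < 1 - p := by linarith
        have hLpos : 0 < (p - 1/2) / Real.log (p/(1-p)) := by
          rcases lt_or_gt_of_ne hhalf with h | h
          · have hL0 : Real.log (p/(1-p)) < 0 :=
              Real.log_neg (div_pos hp0' hq0) (by rw [div_lt_one hq0]; linarith)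
            exact div_pos_of_neg_of_neg (by linarith) hL0
          · have hL0 : 0 < Real.log (p/(1-p)) :=
              Real.log_pos (by rw [lt_div_iff₀ hq0]; linarith)
            exact div_pos (by linarith) hL0
        positivity
      exact hmem _ hcpos (by
        have h2 : (2 * Real.sqrt ((p - 1/2) / Real.log (p/(1-p))))^2
            = (2 * Real.sqrt ((p - 1/2) / Real.log (p/(1-p))))^2 := rfl
        exact hkey)
end
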